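/- Let K be a nonempty subset of a metric space (X,d) and let T, f, g : K → K be three self-maps such that the closure of T(K) is contained in f(K) ∩ g(K). Suppose there is a monotonically increasing continuous function ψ : [0,∞) → [0,∞) with ψ(t) < t for all t > 0 such that for all x, y ∈ K, d(Tx,Ty) ≤ ψ( min{ max{ d(fx,gy), d(Tx,fx), d(Ty,gy), (1/2)[d(Tx,gy) + d(Ty,fx)] }, max{ d(fy,gx), d(Tx,gx), d(Ty,fy), (1/2)[d(Tx,fy) + d(Ty,gx)] } } ). If at least one of the sets closure(T(K)), f(K), g(K) is a complete metric subspace, and both pairs (T,f) and (T,g) are weakly compatible, then there exists a unique point z ∈ K with Tz = z, fz = z and gz = z; that is, F(T) ∩ F(f) ∩ F(g) is a singleton. -/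
import Mathlib
open Filter Topology


/-- **Main Theorem.** Common fixed point for three weakly compatible self-maps of a
subset `K` of a metric space, under a `ψ`-contractive condition, assuming one of
`closure (T '' K)`, `f '' K`, `g '' K` is complete. -/
theorem common_fixed_point_three_maps
    {X : Type*} [MetricSpace X] (K : Set X) (hK : K.Nonempty)
    (T f g : X → X)
    (hT : Set.MapsTo T K K) (hf : Set.MapsTo f K K) (hg : Set.MapsTo g K K)
    (hsub : closure (T '' K) ⊆ f '' K ∩ g '' K)
    (ψ : ℝ → ℝ)
    (hψmono : MonotoneOn ψ (Set.Ici 0))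
    (hψcont : ContinuousOn ψ (Set.Ici 0))
    (hψnonneg : ∀ t ≥ (0 : ℝ), 0 ≤ ψ t)
    (hψlt : ∀ t > (0 : ℝ), ψ t < t)
    (hcontr : ∀ x ∈ K, ∀ y ∈ K,
      dist (T x) (T y) ≤ ψ (min
        (max (max (dist (f x) (g y)) (dist (T x) (f x)))
          (max (dist (T y) (g y)) ((dist (T x) (g y) + dist (T y) (f x)) / 2)))
        (max (max (dist (f y) (g x)) (dist (T x) (g x)))
          (max (dist (T y) (f y)) ((dist (T x) (f y) + dist (T y) (g x)) / 2)))))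
    (hcomplete : IsComplete (closure (T '' K)) ∨ IsComplete (f '' K) ∨ IsComplete (g '' K))
    (hwcf : ∀ x ∈ K, T x = f x → T (f x) = f (T x))
    (hwcg : ∀ x ∈ K, T x = g x → T (g x) = g (T x)) :
    ∃! z, z ∈ K ∧ T z = z ∧ f z = z ∧ g z = z := by
  classical
  obtain ⟨x0, hx0⟩ := hK
  -- choice functions
  have hexg : ∀ p : X, ∃ q, p ∈ K → q ∈ K ∧ g q = T p := by
    intro p
    by_cases hp : p ∈ K
    · obtain ⟨q, hq, hq2⟩ := (hsub (subset_closure ⟨p, hp, rfl⟩)).2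
      exact ⟨q, fun _ => ⟨hq, hq2⟩⟩
    · exact ⟨p, fun h => absurd h hp⟩
  have hexf : ∀ p : X, ∃ q, p ∈ K → q ∈ K ∧ f q = T p := by
    intro p
    by_cases hp : p ∈ K
    · obtain ⟨q, hq, hq2⟩ := (hsub (subset_closure ⟨p, hp, rfl⟩)).1
      exact ⟨q, fun _ => ⟨hq, hq2⟩⟩
    · exact ⟨p, fun h => absurd h hp⟩
  choose G hG using hexg
  choose F hF using hexf
  obtain ⟨x, hx0', hxsucc⟩ : ∃ x : ℕ → X, x 0 = x0 ∧
      ∀ n, x (n+1) = if Even n then G (x n) else F (x n) :=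
    ⟨fun n => Nat.rec x0 (fun n p => if Even n then G p else F p) n, rfl, fun n => rfl⟩
  have hxK : ∀ n, x n ∈ K := by
    intro n
    induction n with
    | zero => rw [hx0']; exact hx0
    | succ n ih =>
      rw [hxsucc]
      split_ifs
      · exact (hG (x n) ih).1
      · exact (hF (x n) ih).1
  obtain ⟨y, hy⟩ : ∃ y : ℕ → X, ∀ n, y n = T (x n) := ⟨_, fun n => rfl⟩
  have hodd : ∀ n, Even n → g (x (n+1)) = y n := by
    intro n hn; rw [hxsucc, if_pos hn, hy]; exact (hG (x n) (hxK n)).2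
  have heven : ∀ n, ¬ Even n → f (x (n+1)) = y n := by
    intro n hn; rw [hxsucc, if_neg hn, hy]; exact (hF (x n) (hxK n)).2
  -- the basic contraction estimate (one side of the min)
  have key : ∀ a ∈ K, ∀ b ∈ K, dist (T a) (T b) ≤
      ψ (max (max (dist (f a) (g b)) (dist (T a) (f a)))
        (max (dist (T b) (g b)) ((dist (T a) (g b) + dist (T b) (f a)) / 2))) := by
    intro a ha b hb
    refine (hcontr a ha b hb).trans (hψmono ?_ ?_ (min_le_left _ _))
    · refine Set.mem_Ici.2 (le_min ?_ ?_) <;>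
        exact dist_nonneg.trans ((le_max_left _ _).trans (le_max_left _ _))
    · exact Set.mem_Ici.2 (dist_nonneg.trans ((le_max_left _ _).trans (le_max_left _ _)))
  obtain ⟨B, hB⟩ : ∃ B : ℕ → ℕ → ℝ, ∀ p q, B p q =
      max (max (dist (y p) (y q)) (dist (y (p+1)) (y p)))
        (max (dist (y (q+1)) (y q)) ((dist (y (p+1)) (y q) + dist (y (q+1)) (y p)) / 2)) :=
    ⟨_, fun p q => rfl⟩
  have hB0 : ∀ p q, 0 ≤ B p q := by
    intro p q
    rw [hB]
    exact dist_nonneg.trans ((le_max_left _ _).trans (le_max_left _ _))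
  have hBsymm : ∀ p q, B p q = B q p := by
    intro p q
    rw [hB, hB, dist_comm (y q) (y p), dist_comm (y (q+1)) (y p), dist_comm (y (p+1)) (y q),
      add_comm (dist (y q) (y (p+1))) (dist (y p) (y (q+1))), max_max_max_comm]
  have genkey : ∀ i j, ¬ Even i → Even j →
      dist (y (i+1)) (y (j+1)) ≤ ψ (B i j) := by
    intro i j hi hj
    have h1 : f (x (i+1)) = y i := heven i hi
    have h2 : g (x (j+1)) = y j := hodd j hj
    have hk := key (x (i+1)) (hxK _) (x (j+1)) (hxK _)
    rw [h1, h2, ← hy, ← hy, ← hB] at hk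
    exact hk
  have genkey2 : ∀ p q, Odd (p + q) → dist (y (p+1)) (y (q+1)) ≤ ψ (B p q) := by
    intro p q hpq
    rcases Nat.even_or_odd p with hp | hp
    · have hq : ¬ Even q := by
        simp only [Nat.even_iff, Nat.odd_iff] at hp hpq ⊢; omega
      rw [dist_comm, hBsymm]
      exact genkey q p hq hp
    · have hq : Even q := by
        simp only [Nat.even_iff, Nat.odd_iff] at hp hpq ⊢; omega
      exact genkey p q (by simp only [Nat.even_iff, Nat.odd_iff] at hp ⊢; omega) hq
  obtain ⟨ds, hds⟩ : ∃ ds : ℕ → ℝ, ∀ n, ds n = dist (y n) (y (n+1)) := ⟨_, fun n => rfl⟩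
  have hds0 : ∀ n, 0 ≤ ds n := fun n => (hds n).symm ▸ dist_nonneg
  have hdsc : ∀ n, dist (y (n+1)) (y n) = ds n := fun n => by rw [hds, dist_comm]
  have hL2 : ∀ a b : ℝ, 0 ≤ a → 0 ≤ b → a ≤ ψ (max a b) → a ≤ b ∧ a ≤ ψ b := by
    intro a b ha hb h
    rcases le_or_gt a b with hab | hab
    · exact ⟨hab, by rwa [max_eq_right hab] at h⟩
    · exfalso
      have ha' : 0 < a := lt_of_le_of_lt hb hab
      have := hψlt a ha'
      rw [max_eq_left hab.le] at h
      linarith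
  have hstep : ∀ n, ds (n+1) ≤ ds n ∧ ds (n+1) ≤ ψ (ds n) := by
    intro n
    have h : dist (y (n+2)) (y (n+1)) ≤ ψ (B (n+1) n) :=
      genkey2 (n+1) n (by simp only [Nat.odd_iff]; omega)
    have hBeq : B (n+1) n = max (max (dist (y (n+1)) (y n)) (dist (y (n+2)) (y (n+1))))
        (max (dist (y (n+1)) (y n)) ((dist (y (n+2)) (y n) + dist (y (n+1)) (y (n+1))) / 2)) :=
      hB (n+1) n
    have h2 : dist (y (n+2)) (y (n+1)) = ds (n+1) := hdsc (n+1)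
    have hm1 : ds n ≤ max (ds n) (ds (n+1)) := le_max_left _ _
    have hm2 : ds (n+1) ≤ max (ds n) (ds (n+1)) := le_max_right _ _
    have htri : dist (y (n+2)) (y n) ≤ ds (n+1) + ds n := by
      calc dist (y (n+2)) (y n) ≤ dist (y (n+2)) (y (n+1)) + dist (y (n+1)) (y n) :=
            dist_triangle _ _ _
        _ = ds (n+1) + ds n := by rw [h2, hdsc]
    have hBle : B (n+1) n ≤ max (ds n) (ds (n+1)) := by
      rw [hBeq, dist_self, hdsc n, h2]
      refine max_le (max_le hm1 hm2) (max_le hm1 ?_)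
      linarith
    have hmain : ds (n+1) ≤ ψ (max (ds (n+1)) (ds n)) := by
      rw [max_comm]
      calc ds (n+1) = dist (y (n+2)) (y (n+1)) := h2.symm
        _ ≤ ψ (B (n+1) n) := h
        _ ≤ ψ (max (ds n) (ds (n+1))) :=
            hψmono (Set.mem_Ici.2 (hB0 _ _)) (Set.mem_Ici.2 (le_trans (hds0 n) hm1)) hBle
    exact hL2 _ _ (hds0 _) (hds0 _) hmain
  -- gap lemma for ψ
  have hgap : ∀ c : ℝ, 0 < c → ∃ δ : ℝ, 0 < δ ∧ ψ (c + 2*δ) ≤ c - 2*δ := by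
    intro c hc
    have hψc : ψ c < (ψ c + c) / 2 := by have := hψlt c hc; linarith
    have hev : ∀ᶠ s in nhdsWithin c (Set.Ici 0), ψ s < (ψ c + c) / 2 :=
      (hψcont c hc.le).eventually (eventually_lt_nhds hψc)
    rw [Filter.eventually_iff, Metric.mem_nhdsWithin_iff] at hev
    obtain ⟨ε, hε, hball⟩ := hev
    have hmc : (ψ c + c) / 2 < c := by have := hψlt c hc; linarith
    refine ⟨min (ε/4) ((c - (ψ c + c)/2)/2), lt_min (by linarith) (by linarith), ?_⟩
    set δ := min (ε/4) ((c - (ψ c + c)/2)/2) with hδdef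
    have hδ1 : δ ≤ ε/4 := min_le_left _ _
    have hδ2 : δ ≤ (c - (ψ c + c)/2)/2 := min_le_right _ _
    have hδ0 : 0 < δ := lt_min (by linarith) (by linarith)
    have hmem : c + 2*δ ∈ Metric.ball c ε ∩ Set.Ici 0 := by
      constructor
      · rw [Metric.mem_ball, Real.dist_eq, abs_of_nonneg (by linarith)]
        linarith
      · exact Set.mem_Ici.2 (by linarith)
    have := hball hmem
    simp only [Set.mem_setOf_eq] at this
    linarith
  have hdspsi : ∀ n, ds (n+1) ≤ ψ (ds n) := fun n => (hstep n).2
  have hdsanti : Antitone ds := antitone_nat_of_succ_le (fun n => (hstep n).1)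
  have hd0 : Filter.Tendsto ds Filter.atTop (nhds 0) := by
    have hbdd : BddBelow (Set.range ds) := ⟨0, by rintro r ⟨n, rfl⟩; exact hds0 n⟩
    have hconv := tendsto_atTop_ciInf hdsanti hbdd
    have hr0 : 0 ≤ ⨅ n, ds n := le_ciInf (fun n => hds0 n)
    have hreq : (⨅ n, ds n) = 0 := by
      by_contra hne
      have hrpos : 0 < ⨅ n, ds n := lt_of_le_of_ne hr0 (Ne.symm hne)
      set r := ⨅ n, ds n with hrdef
      obtain ⟨δ, hδ0, hδψ⟩ := hgap r hrpos
      have hev : ∀ᶠ n in Filter.atTop, ds n < r + 2*δ :=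
        hconv.eventually (eventually_lt_nhds (by linarith))
      obtain ⟨N, hN⟩ := hev.exists
      have h1 : ds (N+1) ≤ ψ (ds N) := hdspsi N
      have h2 : ψ (ds N) ≤ ψ (r + 2*δ) :=
        hψmono (Set.mem_Ici.2 (hds0 N)) (Set.mem_Ici.2 (by linarith)) hN.le
      have h3 : r ≤ ds (N+1) := ciInf_le hbdd (N+1)
      linarith
    rwa [hreq] at hconv
  have hcauchy : CauchySeq y := by
    rw [Metric.cauchySeq_iff']
    intro ε hε
    obtain ⟨δ, hδ0, hδψ⟩ := hgap (ε/2) (half_pos hε)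
    obtain ⟨M, hM⟩ := Metric.tendsto_atTop.mp hd0 δ hδ0
    have hMds : ∀ n, M ≤ n → ds n ≤ δ := by
      intro n hn
      have h := hM n hn
      rw [Real.dist_eq, sub_zero, abs_of_nonneg (hds0 n)] at h
      exact h.le
    have claim : ∀ k, dist (y (M+1+k)) (y (M+1)) ≤ ε/2 := by
      intro k
      induction k with
      | zero => simpa using (half_pos hε).le
      | succ k ih =>
        rw [show M+1+(k+1) = M+k+2 from by omega]
        rw [show M+1+k = M+k+1 from by omega] at ih
        have hdsM : ds M ≤ δ := hMds M le_rfl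
        have hdsM1 : ds (M+1) ≤ δ := hMds (M+1) (by omega)
        have hdsMk : ds (M+k+1) ≤ δ := hMds (M+k+1) (by omega)
        have hc1 : dist (y (M+k+2)) (y (M+k+1)) = ds (M+k+1) := hdsc (M+k+1)
        have hpre : dist (y (M+k+2)) (y (M+1)) ≤ ε/2 + δ := by
          calc dist (y (M+k+2)) (y (M+1))
              ≤ dist (y (M+k+2)) (y (M+k+1)) + dist (y (M+k+1)) (y (M+1)) :=
                dist_triangle _ _ _
            _ ≤ ε/2 + δ := by rw [hc1]; linarith
        have hψB : ∀ P : ℝ, 0 ≤ P → P ≤ ε/2 + 2*δ → ψ P ≤ ε/2 - 2*δ := by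
          intro P hP0 hPle
          exact (hψmono (Set.mem_Ici.2 hP0) (Set.mem_Ici.2 (by linarith)) hPle).trans hδψ
        rcases Nat.even_or_odd k with hk | hk
        · -- k even : contraction on indices (M+1, M+k+2)
          have h := genkey2 M (M+k+1)
            (by simp only [Nat.even_iff] at hk; simp only [Nat.odd_iff]; omega)
          have h' : dist (y (M+1)) (y (M+k+2)) ≤ ψ (B M (M+k+1)) := h
          have hBeq : B M (M+k+1) = max (max (dist (y M) (y (M+k+1))) (dist (y (M+1)) (y M)))
              (max (dist (y (M+k+2)) (y (M+k+1)))
                ((dist (y (M+1)) (y (M+k+1)) + dist (y (M+k+2)) (y M)) / 2)) := hB M (M+k+1)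
          have hb : dist (y (M+1)) (y M) = ds M := hdsc M
          have ha : dist (y M) (y (M+k+1)) ≤ δ + ε/2 := by
            calc dist (y M) (y (M+k+1))
                ≤ dist (y M) (y (M+1)) + dist (y (M+1)) (y (M+k+1)) := dist_triangle _ _ _
              _ ≤ δ + ε/2 := by
                  rw [show dist (y M) (y (M+1)) = ds M from (hds M).symm,
                    dist_comm (y (M+1)) (y (M+k+1))]
                  linarith
          have he2 : dist (y (M+k+2)) (y M) ≤ ε/2 + 2*δ := by
            calc dist (y (M+k+2)) (y M)
                ≤ dist (y (M+k+2)) (y (M+1)) + dist (y (M+1)) (y M) := dist_triangle _ _ _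
              _ ≤ ε/2 + 2*δ := by rw [hb]; linarith
          have hBle : B M (M+k+1) ≤ ε/2 + 2*δ := by
            rw [hBeq, hb, hc1, dist_comm (y (M+1)) (y (M+k+1))]
            refine max_le (max_le (by linarith) (by linarith))
              (max_le (by linarith) (by linarith))
          have hfinal : dist (y (M+1)) (y (M+k+2)) ≤ ε/2 - 2*δ :=
            h'.trans (hψB _ (hB0 _ _) hBle)
          rw [dist_comm]
          linarith
        · -- k odd : contraction on indices (M+2, M+k+2)
          have h := genkey2 (M+1) (M+k+1)
            (by simp only [Nat.odd_iff] at hk ⊢; omega)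
          have h' : dist (y (M+2)) (y (M+k+2)) ≤ ψ (B (M+1) (M+k+1)) := h
          have hBeq : B (M+1) (M+k+1) = max (max (dist (y (M+1)) (y (M+k+1))) (dist (y (M+2)) (y (M+1))))
              (max (dist (y (M+k+2)) (y (M+k+1)))
                ((dist (y (M+2)) (y (M+k+1)) + dist (y (M+k+2)) (y (M+1))) / 2)) := hB (M+1) (M+k+1)
          have hb : dist (y (M+2)) (y (M+1)) = ds (M+1) := hdsc (M+1)
          have hfar : dist (y (M+2)) (y (M+k+1)) ≤ δ + ε/2 := by
            calc dist (y (M+2)) (y (M+k+1))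
                ≤ dist (y (M+2)) (y (M+1)) + dist (y (M+1)) (y (M+k+1)) := dist_triangle _ _ _
              _ ≤ δ + ε/2 := by rw [hb, dist_comm (y (M+1)) (y (M+k+1))]; linarith
          have hBle : B (M+1) (M+k+1) ≤ ε/2 + 2*δ := by
            rw [hBeq, hb, hc1, dist_comm (y (M+1)) (y (M+k+1))]
            refine max_le (max_le (by linarith) (by linarith))
              (max_le (by linarith) (by linarith))
          have hfinal : dist (y (M+2)) (y (M+k+2)) ≤ ε/2 - 2*δ :=
            h'.trans (hψB _ (hB0 _ _) hBle)
          calc dist (y (M+k+2)) (y (M+1))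
              ≤ dist (y (M+k+2)) (y (M+2)) + dist (y (M+2)) (y (M+1)) := dist_triangle _ _ _
            _ ≤ ε/2 := by rw [dist_comm (y (M+k+2)) (y (M+2)), hb]; linarith
    have hN : ∀ n ≥ M+1, dist (y n) (y (M+1)) < ε := by
      intro n hn
      have h := claim (n - (M+1))
      rw [show M+1+(n-(M+1)) = n from by omega] at h
      linarith
    exact ⟨M+1, hN⟩
  -- existence of the limit z
  have hymem : ∀ n, y n ∈ T '' K := fun n => (hy n).symm ▸ ⟨x n, hxK n, rfl⟩
  obtain ⟨z, hz⟩ : ∃ z, Filter.Tendsto y Filter.atTop (nhds z) := by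
    rcases hcomplete with hC | hC | hC
    · obtain ⟨z, _, hz⟩ := cauchySeq_tendsto_of_isComplete hC
        (fun n => subset_closure (hymem n)) hcauchy
      exact ⟨z, hz⟩
    · have hmono : Filter.Tendsto (fun n : ℕ => 2*n+1) Filter.atTop Filter.atTop :=
        StrictMono.tendsto_atTop (fun a b h => by omega)
      have hsub1 : ∀ n, y (2*n+1) ∈ f '' K := fun n =>
        ⟨x (2*n+2), hxK _, heven (2*n+1) (by simp [Nat.even_iff, Nat.add_mul_mod_self_left])⟩
      obtain ⟨z, _, hz⟩ := cauchySeq_tendsto_of_isComplete hC hsub1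
        (hcauchy.comp_tendsto hmono)
      exact ⟨z, tendsto_nhds_of_cauchySeq_of_subseq hcauchy hmono hz⟩
    · have hmono : Filter.Tendsto (fun n : ℕ => 2*n) Filter.atTop Filter.atTop :=
        StrictMono.tendsto_atTop (fun a b h => by omega)
      have hsub1 : ∀ n, y (2*n) ∈ g '' K := fun n =>
        ⟨x (2*n+1), hxK _, hodd (2*n) (even_two_mul n)⟩
      obtain ⟨z, _, hz⟩ := cauchySeq_tendsto_of_isComplete hC hsub1
        (hcauchy.comp_tendsto hmono)
      exact ⟨z, tendsto_nhds_of_cauchySeq_of_subseq hcauchy hmono hz⟩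
  have hzc : z ∈ closure (T '' K) :=
    mem_closure_of_tendsto hz (Filter.Eventually.of_forall hymem)
  obtain ⟨u, huK, huf⟩ := (hsub hzc).1
  obtain ⟨v, hvK, hvg⟩ := (hsub hzc).2
  -- quantitative convergence facts
  have hyz : ∀ δ : ℝ, 0 < δ → ∃ N, ∀ n ≥ N, dist (y n) z ≤ δ := by
    intro δ hδ0
    obtain ⟨N, hN⟩ := Metric.tendsto_atTop.mp hz δ hδ0
    exact ⟨N, fun n hn => (hN n hn).le⟩
  have hdsmall : ∀ δ : ℝ, 0 < δ → ∃ N, ∀ n ≥ N, ds n ≤ δ := by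
    intro δ hδ0
    obtain ⟨N, hN⟩ := Metric.tendsto_atTop.mp hd0 δ hδ0
    refine ⟨N, fun n hn => ?_⟩
    have h := hN n hn
    rw [Real.dist_eq, sub_zero, abs_of_nonneg (hds0 n)] at h
    exact h.le
  have hmaxnn : ∀ a b c e : ℝ, 0 ≤ a → (0:ℝ) ≤ max (max a b) (max c e) :=
    fun a b c e ha => ha.trans ((le_max_left _ _).trans (le_max_left _ _))
  -- T u = z
  have htu : T u = z := by
    by_contra hne
    have hc : 0 < dist (T u) z := dist_pos.2 hne
    set c := dist (T u) z with hcdef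
    obtain ⟨δ, hδ0, hδψ⟩ := hgap c hc
    obtain ⟨N1, hN1⟩ := hyz δ hδ0
    obtain ⟨N2, hN2⟩ := hdsmall δ hδ0
    set n := max N1 N2 with hndef
    have h1 : dist (y (2*n)) z ≤ δ := hN1 (2*n) (by omega)
    have h2 : dist (y (2*n+1)) z ≤ δ := hN1 (2*n+1) (by omega)
    have h3 : ds (2*n) ≤ δ := hN2 (2*n) (by omega)
    have hgx : g (x (2*n+1)) = y (2*n) := hodd (2*n) (even_two_mul n)
    have hk := key u huK (x (2*n+1)) (hxK _)
    rw [huf, hgx, ← hy (2*n+1)] at hk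
    have t1 : dist z (y (2*n)) ≤ δ := by rw [dist_comm]; exact h1
    have t2 : dist (y (2*n+1)) (y (2*n)) ≤ δ := by rw [hdsc (2*n)]; exact h3
    have t3 : dist (T u) (y (2*n)) ≤ c + δ := by
      calc dist (T u) (y (2*n)) ≤ dist (T u) z + dist z (y (2*n)) := dist_triangle _ _ _
        _ ≤ c + δ := by rw [← hcdef]; linarith
    have hBig : max (max (dist z (y (2*n))) (dist (T u) z))
        (max (dist (y (2*n+1)) (y (2*n)))
          ((dist (T u) (y (2*n)) + dist (y (2*n+1)) z) / 2)) ≤ c + 2*δ := by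
      refine max_le (max_le (by linarith) (by rw [← hcdef]; linarith))
        (max_le (by linarith) (by linarith))
    have hup : dist (T u) (y (2*n+1)) ≤ c - 2*δ :=
      hk.trans ((hψmono (Set.mem_Ici.2 (hmaxnn _ _ _ _ dist_nonneg))
        (Set.mem_Ici.2 (by linarith)) hBig).trans hδψ)
    have hlow := dist_triangle (T u) (y (2*n+1)) z
    rw [← hcdef] at hlow
    linarith
  -- T v = z
  have htv : T v = z := by
    by_contra hne
    have hc : 0 < dist (T v) z := dist_pos.2 hne
    set c := dist (T v) z with hcdef
    obtain ⟨δ, hδ0, hδψ⟩ := hgap c hc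
    obtain ⟨N1, hN1⟩ := hyz δ hδ0
    obtain ⟨N2, hN2⟩ := hdsmall δ hδ0
    set n := max N1 N2 with hndef
    have h2 : dist (y (2*n+1)) z ≤ δ := hN1 (2*n+1) (by omega)
    have h4 : dist (y (2*n+2)) z ≤ δ := hN1 (2*n+2) (by omega)
    have h3 : ds (2*n+1) ≤ δ := hN2 (2*n+1) (by omega)
    have hfx : f (x (2*n+2)) = y (2*n+1) :=
      heven (2*n+1) (by simp [Nat.even_iff, Nat.add_mul_mod_self_left])
    have hk := key (x (2*n+2)) (hxK _) v hvK
    rw [hvg, hfx, ← hy (2*n+2)] at hk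
    have t2 : dist (y (2*n+2)) (y (2*n+1)) ≤ δ := by rw [hdsc (2*n+1)]; exact h3
    have t3 : dist (T v) (y (2*n+1)) ≤ c + δ := by
      calc dist (T v) (y (2*n+1)) ≤ dist (T v) z + dist z (y (2*n+1)) := dist_triangle _ _ _
        _ ≤ c + δ := by rw [← hcdef, dist_comm z (y (2*n+1))]; linarith
    have hBig : max (max (dist (y (2*n+1)) z) (dist (y (2*n+2)) (y (2*n+1))))
        (max (dist (T v) z)
          ((dist (y (2*n+2)) z + dist (T v) (y (2*n+1))) / 2)) ≤ c + 2*δ := by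
      refine max_le (max_le (by linarith) (by linarith))
        (max_le (by rw [← hcdef]; linarith) (by linarith))
    have hup : dist (y (2*n+2)) (T v) ≤ c - 2*δ :=
      hk.trans ((hψmono (Set.mem_Ici.2 (hmaxnn _ _ _ _ dist_nonneg))
        (Set.mem_Ici.2 (by linarith)) hBig).trans hδψ)
    have hlow := dist_triangle (T v) (y (2*n+2)) z
    have hcm : dist (y (2*n+2)) (T v) = dist (T v) (y (2*n+2)) := dist_comm _ _
    rw [← hcdef] at hlow
    linarith
  -- z is in K and weak compatibility transfers
  have hzK : z ∈ K := by rw [← huf]; exact hf huK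
  have hfz : T z = f z := by
    have h := hwcf u huK (by rw [htu, huf])
    rwa [huf, htu] at h
  have hgz : T z = g z := by
    have h := hwcg v hvK (by rw [htv, hvg])
    rwa [hvg, htv] at h
  -- T z = z
  have hTz : T z = z := by
    by_contra hne
    have hc : 0 < dist (T z) z := dist_pos.2 hne
    set c := dist (T z) z with hcdef
    obtain ⟨δ, hδ0, hδψ⟩ := hgap c hc
    obtain ⟨N1, hN1⟩ := hyz δ hδ0
    obtain ⟨N2, hN2⟩ := hdsmall δ hδ0
    set n := max N1 N2 with hndef
    have h1 : dist (y (2*n)) z ≤ δ := hN1 (2*n) (by omega)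
    have h2 : dist (y (2*n+1)) z ≤ δ := hN1 (2*n+1) (by omega)
    have h3 : ds (2*n) ≤ δ := hN2 (2*n) (by omega)
    have hgx : g (x (2*n+1)) = y (2*n) := hodd (2*n) (even_two_mul n)
    have hk := key z hzK (x (2*n+1)) (hxK _)
    rw [hgx, ← hy (2*n+1), ← hfz, dist_self] at hk
    have t2 : dist (y (2*n+1)) (y (2*n)) ≤ δ := by rw [hdsc (2*n)]; exact h3
    have t3 : dist (T z) (y (2*n)) ≤ c + δ := by
      calc dist (T z) (y (2*n)) ≤ dist (T z) z + dist z (y (2*n)) := dist_triangle _ _ _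
        _ ≤ c + δ := by rw [← hcdef, dist_comm z (y (2*n))]; linarith
    have t4 : dist (y (2*n+1)) (T z) ≤ δ + c := by
      calc dist (y (2*n+1)) (T z) ≤ dist (y (2*n+1)) z + dist z (T z) := dist_triangle _ _ _
        _ ≤ δ + c := by rw [dist_comm z (T z), ← hcdef]; linarith
    have hBig : max (max (dist (T z) (y (2*n))) 0)
        (max (dist (y (2*n+1)) (y (2*n)))
          ((dist (T z) (y (2*n)) + dist (y (2*n+1)) (T z)) / 2)) ≤ c + 2*δ := by
      refine max_le (max_le (by linarith) (by linarith))
        (max_le (by linarith) (by linarith))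
    have hup : dist (T z) (y (2*n+1)) ≤ c - 2*δ :=
      hk.trans ((hψmono (Set.mem_Ici.2 (hmaxnn _ _ _ _ dist_nonneg))
        (Set.mem_Ici.2 (by linarith)) hBig).trans hδψ)
    have hlow := dist_triangle (T z) (y (2*n+1)) z
    rw [← hcdef] at hlow
    linarith
  have hfzz : f z = z := by rw [← hfz, hTz]
  have hgzz : g z = z := by rw [← hgz, hTz]
  refine ⟨z, ⟨hzK, hTz, hfzz, hgzz⟩, ?_⟩
  rintro w ⟨hwK, hTw, hfw, hgw⟩
  by_contra hne
  have hD : 0 < dist w z := dist_pos.2 hne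
  have hk := key w hwK z hzK
  rw [hTw, hTz, hfw, hgzz, dist_self, dist_self, dist_comm z w, add_self_div_two,
    max_eq_left dist_nonneg, max_eq_right dist_nonneg, max_self] at hk
  linarith [hψlt _ hD]
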